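/- Let l > 0 and m ∈ ℝ, and set k := √(l² + m²). Define u(t,θ) := ln(2lk) − ln(l² + (m + k cos t)²) and Q(t,θ) := cos θ for (t,θ) ∈ (0,π)×(0,π). Then the pair (u, Q) satisfies the Gowdy equations (G1) and (G2) on (0,π)×(0,π). (These are the Taub solutions in areal gauge.) -/

import Mathlib

noncomputable section

open Real Set

/-- Partial derivative with respect to the first (time) variable. -/
def pt (f : ℝ → ℝ → ℝ) (t θ : ℝ) : ℝ := deriv (fun s => f s θ) t

/-- Partial derivative with respect to the second (angle) variable. -/
def pth (f : ℝ → ℝ → ℝ) (t θ : ℝ) : ℝ := deriv (fun x => f t x) θ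

/-- The Fuchsian operator `D = t ∂ₜ`. -/
def Dt (f : ℝ → ℝ → ℝ) : ℝ → ℝ → ℝ := fun t θ => t * pt f t θ

/-- The Gowdy equation (G1) for `(u, Q)`. -/
def GowdyG1 (u Q : ℝ → ℝ → ℝ) (t θ : ℝ) : Prop :=
  -pt (pt u) t θ - Real.cot t * pt u t θ + pth (pth u) t θ + Real.cot θ * pth u t θ
    + Real.exp (2 * u t θ) * (Real.sin t ^ 2 / Real.sin θ ^ 2) *
        ((pt Q t θ) ^ 2 - (pth Q t θ) ^ 2) + 2 = 0

/-- The Gowdy equation (G2) for `(u, Q)`. -/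
def GowdyG2 (u Q : ℝ → ℝ → ℝ) (t θ : ℝ) : Prop :=
  -pt (pt Q) t θ - 3 * Real.cot t * pt Q t θ + pth (pth Q) t θ - Real.cot θ * pth Q t θ
    - 2 * (pt u t θ * pt Q t θ - pth u t θ * pth Q t θ) = 0

private lemma aux_hasDerivAt_F (l m k s : ℝ) :
    HasDerivAt (fun s => l ^ 2 + (m + k * Real.cos s) ^ 2)
      (-(2 * (m + k * Real.cos s) * (k * Real.sin s))) s := by
  have h : HasDerivAt (fun s => m + k * Real.cos s) (k * -Real.sin s) s :=
    ((Real.hasDerivAt_cos s).const_mul k).const_add m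
  have h2 := (h.pow 2).const_add (l ^ 2)
  refine h2.congr_deriv ?_
  norm_num

private lemma aux_hasDerivAt_u (l m k : ℝ) (hl : 0 < l) (s : ℝ) :
    HasDerivAt (fun s => Real.log (2 * l * k)
        - Real.log (l ^ 2 + (m + k * Real.cos s) ^ 2))
      (2 * (m + k * Real.cos s) * (k * Real.sin s) / (l ^ 2 + (m + k * Real.cos s) ^ 2)) s := by
  have hF : (0:ℝ) < l ^ 2 + (m + k * Real.cos s) ^ 2 := by positivity
  have h := ((aux_hasDerivAt_F l m k s).log hF.ne').const_sub (Real.log (2 * l * k))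
  refine h.congr_deriv ?_
  field_simp

private lemma aux_hasDerivAt_u' (l m k : ℝ) (hl : 0 < l) (s : ℝ) :
    HasDerivAt (fun s => 2 * (m + k * Real.cos s) * (k * Real.sin s)
        / (l ^ 2 + (m + k * Real.cos s) ^ 2))
      ((((2 * (k * -Real.sin s)) * (k * Real.sin s)
          + (2 * (m + k * Real.cos s)) * (k * Real.cos s)) * (l ^ 2 + (m + k * Real.cos s) ^ 2)
        - (2 * (m + k * Real.cos s) * (k * Real.sin s))
          * (-(2 * (m + k * Real.cos s) * (k * Real.sin s))))
      / (l ^ 2 + (m + k * Real.cos s) ^ 2) ^ 2) s := by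
  have hF : (0:ℝ) < l ^ 2 + (m + k * Real.cos s) ^ 2 := by positivity
  have hA : HasDerivAt (fun s => 2 * (m + k * Real.cos s)) (2 * (k * -Real.sin s)) s :=
    (((Real.hasDerivAt_cos s).const_mul k).const_add m).const_mul 2
  have hB : HasDerivAt (fun s => k * Real.sin s) (k * Real.cos s) s :=
    (Real.hasDerivAt_sin s).const_mul k
  have h := (hA.mul hB).div (aux_hasDerivAt_F l m k s) hF.ne'
  exact h


/-- Taub -/
theorem taub_solves_gowdy (l m : ℝ) (hl : 0 < l) :
    ∀ t ∈ Ioo (0 : ℝ) π, ∀ θ ∈ Ioo (0 : ℝ) π,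
      GowdyG1
        (fun t _ => Real.log (2 * l * Real.sqrt (l ^ 2 + m ^ 2))
          - Real.log (l ^ 2 + (m + Real.sqrt (l ^ 2 + m ^ 2) * Real.cos t) ^ 2))
        (fun _ θ => Real.cos θ) t θ ∧
      GowdyG2
        (fun t _ => Real.log (2 * l * Real.sqrt (l ^ 2 + m ^ 2))
          - Real.log (l ^ 2 + (m + Real.sqrt (l ^ 2 + m ^ 2) * Real.cos t) ^ 2))
        (fun _ θ => Real.cos θ) t θ := by
  intro t ht θ hθ
  have hst : Real.sin t ≠ 0 := (Real.sin_pos_of_pos_of_lt_pi ht.1 ht.2).ne'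
  have hsθ : Real.sin θ ≠ 0 := (Real.sin_pos_of_pos_of_lt_pi hθ.1 hθ.2).ne'
  set k := Real.sqrt (l ^ 2 + m ^ 2) with hkdef
  have hk : 0 < k := Real.sqrt_pos.mpr (by positivity)
  have hk2 : k ^ 2 = l ^ 2 + m ^ 2 := Real.sq_sqrt (by positivity)
  have hF : (0:ℝ) < l ^ 2 + (m + k * Real.cos t) ^ 2 := by positivity
  set U : ℝ → ℝ → ℝ := fun t _ => Real.log (2 * l * k)
      - Real.log (l ^ 2 + (m + k * Real.cos t) ^ 2) with hU
  set Q : ℝ → ℝ → ℝ := fun _ θ => Real.cos θ with hQ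
  have hptu : ∀ s x, pt U s x
      = 2 * (m + k * Real.cos s) * (k * Real.sin s) / (l ^ 2 + (m + k * Real.cos s) ^ 2) :=
    fun s x => (aux_hasDerivAt_u l m k hl s).deriv
  have hpttu : pt (pt U) t θ
      = ((((2 * (k * -Real.sin t)) * (k * Real.sin t)
          + (2 * (m + k * Real.cos t)) * (k * Real.cos t)) * (l ^ 2 + (m + k * Real.cos t) ^ 2)
        - (2 * (m + k * Real.cos t) * (k * Real.sin t))
          * (-(2 * (m + k * Real.cos t) * (k * Real.sin t))))
      / (l ^ 2 + (m + k * Real.cos t) ^ 2) ^ 2) := by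
    have h : (fun s => pt U s θ)
        = fun s => 2 * (m + k * Real.cos s) * (k * Real.sin s)
            / (l ^ 2 + (m + k * Real.cos s) ^ 2) := funext fun s => hptu s θ
    show deriv (fun s => pt U s θ) t = _
    rw [h]
    exact (aux_hasDerivAt_u' l m k hl t).deriv
  have hpthu : ∀ x, pth U t x = 0 := fun x => by simp [pth, hU]
  have hpthpthu : pth (pth U) t θ = 0 := by
    have h : (fun x => pth U t x) = fun _ => (0:ℝ) := funext hpthu
    show deriv (fun x => pth U t x) θ = 0
    rw [h]; simp
  have hptQ : ∀ s x, pt Q s x = 0 := fun s x => by simp [pt, hQ]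
  have hptptQ : pt (pt Q) t θ = 0 := by
    have h : (fun s => pt Q s θ) = fun _ => (0:ℝ) := funext fun s => hptQ s θ
    show deriv (fun s => pt Q s θ) t = 0
    rw [h]; simp
  have hpthQ : ∀ x, pth Q t x = -Real.sin x := fun x => by simp [pth, hQ]
  have hpthpthQ : pth (pth Q) t θ = -Real.cos θ := by
    have h : (fun x => pth Q t x) = fun x => -Real.sin x := funext hpthQ
    show deriv (fun x => pth Q t x) θ = _
    rw [h]
    simpa using (Real.hasDerivAt_sin θ).neg.deriv
  have hexp : Real.exp (2 * U t θ) = (2 * l * k) ^ 2 / (l ^ 2 + (m + k * Real.cos t) ^ 2) ^ 2 := by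
    show Real.exp (2 * (Real.log (2 * l * k) - Real.log (l ^ 2 + (m + k * Real.cos t) ^ 2))) = _
    rw [mul_sub, Real.exp_sub]
    simp only [two_mul, Real.exp_add]
    rw [Real.exp_log (by positivity), Real.exp_log hF]
    ring
  have hsc : Real.sin t ^ 2 + Real.cos t ^ 2 = 1 := Real.sin_sq_add_cos_sq t
  constructor
  · unfold GowdyG1
    rw [hpttu, hptu, hpthu, hpthpthu, hptQ, hpthQ, hexp,
      Real.cot_eq_cos_div_sin, Real.cot_eq_cos_div_sin]
    field_simp
    linear_combination (-2 * Real.sin θ ^ 2 * (l ^ 2 + (m + k * Real.cos t) ^ 2)) * hk2 + (-2 * Real.sin θ ^ 2 * (l ^ 2 + (m + k * Real.cos t) ^ 2) * k ^ 2) * hsc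
  · unfold GowdyG2
    rw [hptptQ, hptQ, hpthQ, hpthpthQ, hpthu]
    simp only [Real.cot_eq_cos_div_sin]
    field_simp
    ring
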